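/- There exists a constant θ > 0, depending only on A and E, such that for every x ∈ ℝ^n there is a point x* ∈ P with ‖x − x*‖ ≤ θ · ‖( max(Ax − z, 0), Ex − s )‖, where max(·,0) is taken componentwise and the norm is the Euclidean norm of the concatenated residual vector in ℝ^{p+q}. In particular dist(x, P) ≤ θ‖( max(Ax − z, 0), Ex − s )‖ for all x ∈ ℝ^n (Hoffman's bound). -/

import Mathlib

open Matrix RealInnerProductSpace

set_option maxHeartbeats 1000000


lemma hoffman_carath {V : Type*} [AddCommGroup V] [Module ℝ V] {ι : Type*} [DecidableEq ι]
    (g : ι → V) (S : Finset ι) :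
    ∀ (l : ι → ℝ), (∀ k ∈ S, 0 ≤ l k) →
    ∃ T : Finset ι, T ⊆ S ∧ LinearIndependent ℝ (fun k : T => g k) ∧
      ∃ m : ι → ℝ, (∀ k ∈ T, 0 ≤ m k) ∧ ∑ k ∈ T, m k • g k = ∑ k ∈ S, l k • g k := by
  induction S using Finset.strongInductionOn with
  | _ S ih =>
    intro l hl
    by_cases hli : LinearIndependent ℝ (fun k : S => g k)
    · exact ⟨S, le_refl _, hli, l, hl, rfl⟩
    · obtain ⟨c, hc0, i0, hi0⟩ := Fintype.not_linearIndependent_iff.mp hli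
      have key : ∀ β : ι → ℝ, (∑ k ∈ S, β k • g k = 0) → (∃ k ∈ S, 0 < β k) →
          ∃ T : Finset ι, T ⊆ S ∧ LinearIndependent ℝ (fun k : T => g k) ∧
            ∃ m : ι → ℝ, (∀ k ∈ T, 0 ≤ m k) ∧ ∑ k ∈ T, m k • g k = ∑ k ∈ S, l k • g k := by
        intro β hβ0 hβpos
        have hFne : (S.filter (fun k => 0 < β k)).Nonempty := by
          obtain ⟨k, hkS, hk⟩ := hβpos
          exact ⟨k, Finset.mem_filter.mpr ⟨hkS, hk⟩⟩
        obtain ⟨k0, hk0F, hk0min⟩ :=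
          Finset.exists_min_image _ (fun k => l k / β k) hFne
        obtain ⟨hk0S, hk0pos⟩ := Finset.mem_filter.mp hk0F
        set t : ℝ := l k0 / β k0 with ht
        have ht0 : 0 ≤ t := div_nonneg (hl k0 hk0S) hk0pos.le
        set l' : ι → ℝ := fun k => l k - t * β k with hl'
        have hl'nn : ∀ k ∈ S.erase k0, 0 ≤ l' k := by
          intro k hk
          have hkS := Finset.mem_of_mem_erase hk
          by_cases hb : 0 < β k
          · have := hk0min k (Finset.mem_filter.mpr ⟨hkS, hb⟩)
            have : t * β k ≤ (l k / β k) * β k := by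
              apply mul_le_mul_of_nonneg_right this hb.le
            simp only [hl']
            have hcan : (l k / β k) * β k = l k := div_mul_cancel₀ _ hb.ne'
            linarith [hcan ▸ this]
          · push_neg at hb
            have : t * β k ≤ 0 := mul_nonpos_of_nonneg_of_nonpos ht0 hb
            have := hl k hkS
            simp only [hl']; linarith
        have hl'k0 : l' k0 = 0 := by
          simp only [hl', ht]
          field_simp
          ring
        have hsum : ∑ k ∈ S.erase k0, l' k • g k = ∑ k ∈ S, l k • g k := by
          rw [Finset.sum_erase _ (by rw [hl'k0]; exact zero_smul ℝ _)]
          have : ∑ k ∈ S, l' k • g k = ∑ k ∈ S, l k • g k - t • ∑ k ∈ S, β k • g k := by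
            rw [Finset.smul_sum, ← Finset.sum_sub_distrib]
            apply Finset.sum_congr rfl
            intro k _
            simp [hl', sub_smul, smul_smul]
          rw [this, hβ0, smul_zero, sub_zero]
        obtain ⟨T, hTsub, hTind, m, hmnn, hmsum⟩ :=
          ih (S.erase k0) (Finset.erase_ssubset hk0S) l' hl'nn
        exact ⟨T, hTsub.trans (Finset.erase_subset _ _), hTind, m, hmnn,
          by rw [hmsum, hsum]⟩
      set α : ι → ℝ := fun k => if h : k ∈ S then c ⟨k, h⟩ else 0 with hα
      have hrel : ∑ k ∈ S, α k • g k = 0 := by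
        rw [← Finset.sum_attach S (fun k => α k • g k), ← hc0]
        apply Finset.sum_congr rfl
        intro k _
        simp [hα, k.2]
      rcases lt_trichotomy (α ↑i0) 0 with hlt | heq | hgt
      · apply key (fun k => -α k)
        · simp only [neg_smul, Finset.sum_neg_distrib, hrel, neg_zero]
        · exact ⟨↑i0, i0.2, by simpa using hlt⟩
      · exfalso; apply hi0
        have : α ↑i0 = c i0 := by simp [hα, i0.2]
        rw [← this, heq]
      · exact key α hrel ⟨↑i0, i0.2, hgt⟩


lemma hoffman_mult_bound {V : Type*} [NormedAddCommGroup V] [InnerProductSpace ℝ V]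
    [FiniteDimensional ℝ V] {ι : Type*} [DecidableEq ι] (g : ι → V) (T : Finset ι)
    (hT : LinearIndependent ℝ (fun k : T => g k)) :
    ∃ C : ℝ, 0 < C ∧
      (∀ m : ι → ℝ, Real.sqrt (∑ k ∈ T, m k ^ 2) ≤ C * ‖∑ k ∈ T, m k • g k‖) ∧
      IsClosed {v : V | ∃ m : ι → ℝ, (∀ k ∈ T, 0 ≤ m k) ∧ v = ∑ k ∈ T, m k • g k} := by
  classical
  set L : EuclideanSpace ℝ T →ₗ[ℝ] V :=
    { toFun := fun m => ∑ k : T, m k • g ↑k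
      map_add' := by
        intro u v
        simp [add_smul, Finset.sum_add_distrib]
      map_smul' := by
        intro c u
        simp [smul_smul, Finset.smul_sum] } with hL
  have hLapp : ∀ m : EuclideanSpace ℝ T, L m = ∑ k : T, m k • g ↑k := fun _ => rfl
  have hinj : Function.Injective L := by
    rw [← LinearMap.ker_eq_bot, LinearMap.ker_eq_bot']
    intro m hm
    have := Fintype.linearIndependent_iff.mp hT m (by rw [← hLapp m]; exact hm)
    ext k
    exact this k
  set e := LinearEquiv.ofInjective L hinj with he
  set e' := e.toContinuousLinearEquiv with he'
  have hval : ∀ m, ((e' m : LinearMap.range L) : V) = L m := by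
    intro m
    rfl
  set C : ℝ := ‖(e'.symm : LinearMap.range L →L[ℝ] EuclideanSpace ℝ T)‖ + 1 with hC
  have hCpos : 0 < C := by positivity
  have hbound : ∀ m : EuclideanSpace ℝ T, ‖m‖ ≤ C * ‖L m‖ := by
    intro m
    have h1 : ‖m‖ = ‖e'.symm (e' m)‖ := by rw [ContinuousLinearEquiv.symm_apply_apply]
    have h2 : ‖e'.symm (e' m)‖ ≤
        ‖(e'.symm : LinearMap.range L →L[ℝ] EuclideanSpace ℝ T)‖ * ‖e' m‖ :=
      (e'.symm : LinearMap.range L →L[ℝ] EuclideanSpace ℝ T).le_opNorm _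
    have h3 : ‖e' m‖ = ‖L m‖ := by
      rw [← hval m]
      rfl
    rw [h1]
    calc ‖e'.symm (e' m)‖ ≤ _ * ‖e' m‖ := h2
      _ ≤ C * ‖e' m‖ := by
          apply mul_le_mul_of_nonneg_right _ (norm_nonneg _)
          simp [hC]
      _ = C * ‖L m‖ := by rw [h3]
  have hnorm_eq : ∀ m : EuclideanSpace ℝ T, ‖m‖ = Real.sqrt (∑ k : T, m k ^ 2) := by
    intro m
    rw [EuclideanSpace.norm_eq]
    congr 1
    apply Finset.sum_congr rfl
    intro k _
    rw [Real.norm_eq_abs, sq_abs]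
  refine ⟨C, hCpos, ?_, ?_⟩
  · intro m
    set m' : EuclideanSpace ℝ T := WithLp.toLp 2 (fun k : T => m ↑k : T → ℝ) with hm'
    have hsum : L m' = ∑ k ∈ T, m k • g k := by
      rw [hLapp]
      exact Finset.sum_attach T (fun k => m k • g k)
    have h1 : Real.sqrt (∑ k ∈ T, m k ^ 2) = ‖m'‖ := by
      rw [hnorm_eq m']
      congr 1
      exact (Finset.sum_attach T (fun k => m k ^ 2)).symm
    rw [h1, ← hsum]
    exact hbound m'
  · -- closedness
    have hanti : AntilipschitzWith ⟨C, hCpos.le⟩ L :=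
      AddMonoidHomClass.antilipschitz_of_bound (L.toContinuousLinearMap) (by
        intro x
        exact hbound x)
    have hce : Topology.IsClosedEmbedding L :=
      hanti.isClosedEmbedding (L.toContinuousLinearMap.uniformContinuous)
    have hOclosed : IsClosed {m : EuclideanSpace ℝ T | ∀ k, 0 ≤ m k} := by
      have : {m : EuclideanSpace ℝ T | ∀ k, 0 ≤ m k} =
          ⋂ k : T, {m : EuclideanSpace ℝ T | 0 ≤ m k} := by
        ext m; simp [Set.mem_iInter]
      rw [this]
      apply isClosed_iInter
      intro k
      exact isClosed_le continuous_const (EuclideanSpace.proj (𝕜 := ℝ) k).continuous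
    have himg : {v : V | ∃ m : ι → ℝ, (∀ k ∈ T, 0 ≤ m k) ∧ v = ∑ k ∈ T, m k • g k} =
          L '' {m : EuclideanSpace ℝ T | ∀ k, 0 ≤ m k} := by
        ext v
        constructor
        · rintro ⟨m, hmnn, rfl⟩
          refine ⟨WithLp.toLp 2 (fun k : T => m ↑k : T → ℝ), fun k => hmnn ↑k k.2, ?_⟩
          rw [hLapp]
          exact Finset.sum_attach T (fun k => m k • g k)
        · rintro ⟨m', hm'nn, rfl⟩
          refine ⟨fun k => if h : k ∈ T then m' ⟨k, h⟩ else 0, ?_, ?_⟩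
          · intro k hk
            simp only [dif_pos hk]
            exact hm'nn ⟨k, hk⟩
          · rw [hLapp, ← Finset.sum_attach T
              (fun k => (if h : k ∈ T then m' ⟨k, h⟩ else 0) • g k)]
            apply Finset.sum_congr rfl
            intro k _
            simp [k.2]
    rw [himg]
    exact hce.isClosedMap _ hOclosed

lemma hoffman_uniform {V : Type*} [NormedAddCommGroup V] [InnerProductSpace ℝ V]
    [FiniteDimensional ℝ V] {ι : Type*} [Fintype ι] [DecidableEq ι] (g : ι → V) :
    ∃ C : ℝ, 0 < C ∧ ∀ T : Finset ι, LinearIndependent ℝ (fun k : T => g k) →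
      ∀ m : ι → ℝ, Real.sqrt (∑ k ∈ T, m k ^ 2) ≤ C * ‖∑ k ∈ T, m k • g k‖ := by
  classical
  set F : Finset ι → ℝ := fun T =>
    if h : LinearIndependent ℝ (fun k : T => g k) then (hoffman_mult_bound g T h).choose
    else 1 with hF
  have hFpos : ∀ T, 0 < F T := by
    intro T
    by_cases h : LinearIndependent ℝ (fun k : T => g k)
    · simp only [hF, dif_pos h]
      exact (hoffman_mult_bound g T h).choose_spec.1
    · simp [hF, dif_neg h]
  refine ⟨∑ T : Finset ι, F T, Finset.sum_pos (fun T _ => hFpos T) ⟨∅, Finset.mem_univ _⟩,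
    ?_⟩
  intro T hT m
  have h1 : Real.sqrt (∑ k ∈ T, m k ^ 2) ≤ F T * ‖∑ k ∈ T, m k • g k‖ := by
    simp only [hF, dif_pos hT]
    exact (hoffman_mult_bound g T hT).choose_spec.2.1 m
  refine h1.trans (mul_le_mul_of_nonneg_right ?_ (norm_nonneg _))
  exact Finset.single_le_sum (fun T _ => (hFpos T).le) (Finset.mem_univ T)

/-- Hoffman's bound: for a nonempty polyhedron
`P = {x : Ax ≤ z, Ex = s}` there is a constant `θ > 0`, depending only on `A` and `E`, such
that every `x` admits a point `x* ∈ P` with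
`‖x − x*‖ ≤ θ ‖(max(Ax − z, 0), Ex − s)‖`; in particular
`dist(x, P) ≤ θ ‖(max(Ax − z, 0), Ex − s)‖`. -/
theorem hoffman_bound
    (n p q : ℕ) (hn : 0 < n) (hp : 0 < p) (hq : 0 < q)
    (A : Matrix (Fin p) (Fin n) ℝ) (E : Matrix (Fin q) (Fin n) ℝ)
    (z : EuclideanSpace ℝ (Fin p)) (s : EuclideanSpace ℝ (Fin q))
    (P : Set (EuclideanSpace ℝ (Fin n)))
    (hP : P = {x | (∀ i, Matrix.toEuclideanLin (𝕜 := ℝ) A x i ≤ z i) ∧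
        Matrix.toEuclideanLin (𝕜 := ℝ) E x = s})
    (hPne : P.Nonempty) :
    ∃ θ : ℝ, 0 < θ ∧
      ∀ x : EuclideanSpace ℝ (Fin n),
        (∃ xstar ∈ P, ‖x - xstar‖ ≤
          θ * Real.sqrt ((∑ i, max (Matrix.toEuclideanLin (𝕜 := ℝ) A x i - z i) 0 ^ 2) +
            ‖Matrix.toEuclideanLin (𝕜 := ℝ) E x - s‖ ^ 2)) ∧
        Metric.infDist x P ≤
          θ * Real.sqrt ((∑ i, max (Matrix.toEuclideanLin (𝕜 := ℝ) A x i - z i) 0 ^ 2) +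
            ‖Matrix.toEuclideanLin (𝕜 := ℝ) E x - s‖ ^ 2) := by
  classical
  set a : Fin p → EuclideanSpace ℝ (Fin n) :=
    fun i => (WithLp.equiv 2 (Fin n → ℝ)).symm (A i) with ha
  set e : Fin q → EuclideanSpace ℝ (Fin n) :=
    fun j => (WithLp.equiv 2 (Fin n → ℝ)).symm (E j) with he
  have hAinner : ∀ (x : EuclideanSpace ℝ (Fin n)) (i : Fin p),
      Matrix.toEuclideanLin (𝕜 := ℝ) A x i = ⟪a i, x⟫ := by
    intro x i
    rw [Matrix.toEuclideanLin_apply]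
    simp [Matrix.mulVec, dotProduct, PiLp.inner_apply, RCLike.inner_apply, ha,
      mul_comm]
  have hEinner : ∀ (x : EuclideanSpace ℝ (Fin n)) (j : Fin q),
      Matrix.toEuclideanLin (𝕜 := ℝ) E x j = ⟪e j, x⟫ := by
    intro x j
    rw [Matrix.toEuclideanLin_apply]
    simp [Matrix.mulVec, dotProduct, PiLp.inner_apply, RCLike.inner_apply, he,
      mul_comm]
  have hPmem : ∀ y, y ∈ P ↔ (∀ i, ⟪a i, y⟫ ≤ z i) ∧ (∀ j, ⟪e j, y⟫ = s j) := by
    intro y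
    rw [hP]
    simp only [Set.mem_setOf_eq]
    constructor
    · rintro ⟨h1, h2⟩
      refine ⟨fun i => by rw [← hAinner]; exact h1 i, fun j => by rw [← hEinner, h2]⟩
    · rintro ⟨h1, h2⟩
      refine ⟨fun i => by rw [hAinner]; exact h1 i, ?_⟩
      ext j
      rw [hEinner]
      exact h2 j

  -- convexity and closedness of P
  have hPconv : Convex ℝ P := by
    intro y1 hy1 y2 hy2 b c hb hc hbc
    rw [hPmem] at hy1 hy2 ⊢
    constructor
    · intro i
      rw [inner_add_right, real_inner_smul_right, real_inner_smul_right]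
      calc b * ⟪a i, y1⟫ + c * ⟪a i, y2⟫ ≤ b * z i + c * z i :=
            add_le_add (mul_le_mul_of_nonneg_left (hy1.1 i) hb)
              (mul_le_mul_of_nonneg_left (hy2.1 i) hc)
        _ = z i := by rw [← add_mul, hbc, one_mul]
    · intro j
      rw [inner_add_right, real_inner_smul_right, real_inner_smul_right, hy1.2 j, hy2.2 j,
        ← add_mul, hbc, one_mul]
  have hPclosed : IsClosed P := by
    have hPeq : P = (⋂ i, {y : EuclideanSpace ℝ (Fin n) | ⟪a i, y⟫ ≤ z i}) ∩
        (⋂ j, {y : EuclideanSpace ℝ (Fin n) | ⟪e j, y⟫ = s j}) := by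
      ext y
      simp only [Set.mem_inter_iff, Set.mem_iInter, Set.mem_setOf_eq, hPmem]
    rw [hPeq]
    exact IsClosed.inter
      (isClosed_iInter fun i => isClosed_le (continuous_const.inner continuous_id)
        continuous_const)
      (isClosed_iInter fun j => isClosed_eq (continuous_const.inner continuous_id)
        continuous_const)
  -- generators
  set g : (Fin p ⊕ (Fin q ⊕ Fin q)) → EuclideanSpace ℝ (Fin n) :=
    Sum.elim a (Sum.elim e (fun j => -e j)) with hg
  obtain ⟨C, hCpos, hCunif⟩ := hoffman_uniform g
  refine ⟨Real.sqrt 2 * C, by positivity, ?_⟩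
  intro x
  -- the residual quantity
  set Rq : ℝ := (∑ i, max (Matrix.toEuclideanLin (𝕜 := ℝ) A x i - z i) 0 ^ 2) +
      ‖Matrix.toEuclideanLin (𝕜 := ℝ) E x - s‖ ^ 2 with hRq
  have hRq0 : 0 ≤ Rq := by
    apply add_nonneg
    · exact Finset.sum_nonneg fun i _ => sq_nonneg _
    · exact sq_nonneg _
  obtain ⟨xstar, hxstarP, hdisteq⟩ := hPclosed.exists_infDist_eq_dist hPne x
  have hxstar := (hPmem xstar).1 hxstarP
  -- variational inequality
  have hVI : ∀ y ∈ P, ⟪x - xstar, y - xstar⟫ ≤ 0 := by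
    intro y hy
    by_contra hpos
    push_neg at hpos
    set w := y - xstar with hw
    have hw0 : ‖w‖ ≠ 0 := by
      intro h0
      rw [norm_eq_zero] at h0
      rw [h0, inner_zero_right] at hpos
      exact lt_irrefl 0 hpos
    have hwpos : 0 < ‖w‖ ^ 2 := by positivity
    set t : ℝ := min 1 (⟪x - xstar, w⟫ / ‖w‖ ^ 2) with htdef
    have htpos : 0 < t := lt_min one_pos (div_pos hpos hwpos)
    have ht1 : t ≤ 1 := min_le_left _ _
    have htw : t * ‖w‖ ^ 2 ≤ ⟪x - xstar, w⟫ := by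
      have h := min_le_right 1 (⟪x - xstar, w⟫ / ‖w‖ ^ 2)
      calc t * ‖w‖ ^ 2 ≤ (⟪x - xstar, w⟫ / ‖w‖ ^ 2) * ‖w‖ ^ 2 :=
            mul_le_mul_of_nonneg_right h hwpos.le
        _ = ⟪x - xstar, w⟫ := div_mul_cancel₀ _ hwpos.ne'
    have hmem : xstar + t • w ∈ P := by
      have hco : xstar + t • w = (1 - t) • xstar + t • y := by
        rw [hw]; module
      rw [hco]
      exact hPconv hxstarP hy (by linarith) htpos.le (by ring)
    have hdist : ‖x - xstar‖ ≤ ‖x - (xstar + t • w)‖ := by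
      rw [← dist_eq_norm, ← dist_eq_norm, ← hdisteq]
      exact Metric.infDist_le_dist_of_mem hmem
    have h1 : ‖x - xstar‖ ^ 2 ≤ ‖(x - xstar) - t • w‖ ^ 2 := by
      have he2 : x - (xstar + t • w) = (x - xstar) - t • w := by abel
      rw [← he2]
      exact pow_le_pow_left₀ (norm_nonneg _) hdist 2
    have hexp : ‖(x - xstar) - t • w‖ ^ 2 =
        ‖x - xstar‖ ^ 2 - 2 * (t * ⟪x - xstar, w⟫) + t ^ 2 * ‖w‖ ^ 2 := by
      rw [norm_sub_sq_real, real_inner_smul_right, norm_smul, Real.norm_eq_abs,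
        abs_of_pos htpos, mul_pow]
    rw [hexp] at h1
    nlinarith [htpos, hpos, htw]
  -- normal cone property
  have hNC : ∀ d : EuclideanSpace ℝ (Fin n),
      (∀ i, ⟪a i, xstar⟫ = z i → ⟪a i, d⟫ ≤ 0) → (∀ j, ⟪e j, d⟫ = 0) →
      ⟪x - xstar, d⟫ ≤ 0 := by
    intro d had hed
    haveI : Nonempty (Fin p) := ⟨⟨0, hp⟩⟩
    set t : ℝ := Finset.univ.inf' Finset.univ_nonempty
      (fun i => if ⟪a i, xstar⟫ = z i then 1
        else (z i - ⟪a i, xstar⟫) / (|⟪a i, d⟫| + 1)) with htdef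
    have ht0 : 0 < t := by
      rw [htdef, Finset.lt_inf'_iff]
      intro i _
      split
      · exact one_pos
      · rename_i hne
        have hlt : ⟪a i, xstar⟫ < z i := lt_of_le_of_ne (hxstar.1 i) hne
        have : 0 < |⟪a i, d⟫| + 1 := by positivity
        exact div_pos (by linarith) this
    have hmem : xstar + t • d ∈ P := by
      rw [hPmem]
      constructor
      · intro i
        rw [inner_add_right, real_inner_smul_right]
        by_cases hact : ⟪a i, xstar⟫ = z i
        · have := had i hact
          rw [hact]
          nlinarith [ht0]
        · have hti : t ≤ (z i - ⟪a i, xstar⟫) / (|⟪a i, d⟫| + 1) := by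
            have := Finset.inf'_le
              (fun i => if ⟪a i, xstar⟫ = z i then 1
                else (z i - ⟪a i, xstar⟫) / (|⟪a i, d⟫| + 1)) (Finset.mem_univ i)
            rw [if_neg hact] at this
            exact this
          have hslack : 0 ≤ z i - ⟪a i, xstar⟫ := by linarith [hxstar.1 i]
          have hb : (0:ℝ) ≤ |⟪a i, d⟫| := abs_nonneg _
          have h2 : t * ⟪a i, d⟫ ≤ t * |⟪a i, d⟫| :=
            mul_le_mul_of_nonneg_left (le_abs_self _) ht0.le
          have h3 : t * |⟪a i, d⟫| ≤
              ((z i - ⟪a i, xstar⟫) / (|⟪a i, d⟫| + 1)) * |⟪a i, d⟫| :=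
            mul_le_mul_of_nonneg_right hti hb
          have h4 : ((z i - ⟪a i, xstar⟫) / (|⟪a i, d⟫| + 1)) * |⟪a i, d⟫| ≤
              z i - ⟪a i, xstar⟫ := by
            rw [div_mul_eq_mul_div, div_le_iff₀ (by positivity)]
            nlinarith
          linarith
      · intro j
        rw [inner_add_right, real_inner_smul_right, hed j, mul_zero, add_zero]
        exact hxstar.2 j
    have := hVI _ hmem
    have heq : (xstar + t • d) - xstar = t • d := by abel
    rw [heq, real_inner_smul_right] at this
    nlinarith [ht0]
  -- the finitely generated cone
  set G : Finset (Fin p ⊕ (Fin q ⊕ Fin q)) := Finset.univ.filter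
    (fun k => match k with
      | Sum.inl i => ⟪a i, xstar⟫ = z i
      | Sum.inr _ => True) with hG
  set K : Set (EuclideanSpace ℝ (Fin n)) :=
    {w | ∃ m : (Fin p ⊕ (Fin q ⊕ Fin q)) → ℝ, (∀ k, 0 ≤ m k) ∧ w = ∑ k ∈ G, m k • g k}
    with hK
  have hKconv : Convex ℝ K := by
    rintro w1 ⟨m1, hm1, rfl⟩ w2 ⟨m2, hm2, rfl⟩ b c hb hc hbc
    refine ⟨fun k => b * m1 k + c * m2 k,
      fun k => add_nonneg (mul_nonneg hb (hm1 k)) (mul_nonneg hc (hm2 k)), ?_⟩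
    rw [Finset.smul_sum, Finset.smul_sum, ← Finset.sum_add_distrib]
    apply Finset.sum_congr rfl
    intro k _
    rw [add_smul, smul_smul, smul_smul]
  have hKclosed : IsClosed K := by
    have hunion : K = ⋃ T ∈ {T : Finset (Fin p ⊕ (Fin q ⊕ Fin q)) |
        T ⊆ G ∧ LinearIndependent ℝ (fun k : T => g k)},
        {w | ∃ m : (Fin p ⊕ (Fin q ⊕ Fin q)) → ℝ,
          (∀ k ∈ T, 0 ≤ m k) ∧ w = ∑ k ∈ T, m k • g k} := by
      ext w
      simp only [Set.mem_iUnion, Set.mem_setOf_eq, hK]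
      constructor
      · rintro ⟨m, hm, rfl⟩
        obtain ⟨T, hTG, hTind, m', hm', hsum⟩ := hoffman_carath g G m (fun k _ => hm k)
        exact ⟨T, ⟨hTG, hTind⟩, m', hm', hsum.symm⟩
      · rintro ⟨T, ⟨hTG, _⟩, m, hm, rfl⟩
        refine ⟨fun k => if k ∈ T then m k else 0, ?_, ?_⟩
        · intro k
          by_cases hk : k ∈ T
          · simp only [if_pos hk]
            exact hm k hk
          · simp only [if_neg hk]
            exact le_refl 0
        · rw [← Finset.sum_subset hTG
            (fun k _ hk => by simp only [if_neg hk, zero_smul])]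
          exact Finset.sum_congr rfl fun k hk => by simp only [if_pos hk]
    rw [hunion]
    exact Set.Finite.isClosed_biUnion (Set.toFinite _)
      (fun T hT => (hoffman_mult_bound g T hT.2).choose_spec.2.2)
  have h0K : (0 : EuclideanSpace ℝ (Fin n)) ∈ K :=
    ⟨fun _ => 0, fun k => le_refl 0, by simp⟩
  have hscale : ∀ w ∈ K, ∀ c : ℝ, 0 ≤ c → c • w ∈ K := by
    rintro w ⟨m, hm, rfl⟩ c hc
    refine ⟨fun k => c * m k, fun k => mul_nonneg hc (hm k), ?_⟩
    rw [Finset.smul_sum]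
    exact Finset.sum_congr rfl fun k _ => smul_smul c (m k) (g k)
  have hgen : ∀ k ∈ G, g k ∈ K := by
    intro k hk
    refine ⟨fun k' => if k' = k then 1 else 0, fun k' => by positivity, ?_⟩
    have : ∀ k' ∈ G, (if k' = k then (1:ℝ) else 0) • g k' =
        if k' = k then g k' else 0 := by
      intro k' _
      split <;> simp
    rw [Finset.sum_congr rfl this, Finset.sum_ite_eq' G k g, if_pos hk]
  have hGmem : ∀ i : Fin p, ⟪a i, xstar⟫ = z i → Sum.inl i ∈ G := by
    intro i hact
    rw [hG, Finset.mem_filter]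
    exact ⟨Finset.mem_univ _, hact⟩
  have hGmem1 : ∀ j : Fin q, (Sum.inr (Sum.inl j) : Fin p ⊕ (Fin q ⊕ Fin q)) ∈ G := by
    intro j
    rw [hG, Finset.mem_filter]
    exact ⟨Finset.mem_univ _, trivial⟩
  have hGmem2 : ∀ j : Fin q, (Sum.inr (Sum.inr j) : Fin p ⊕ (Fin q ⊕ Fin q)) ∈ G := by
    intro j
    rw [hG, Finset.mem_filter]
    exact ⟨Finset.mem_univ _, trivial⟩
  -- x - xstar belongs to the cone K
  have hvK : x - xstar ∈ K := by
    by_contra hv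
    obtain ⟨f, u, hfu, huv⟩ := geometric_hahn_banach_closed_point hKconv hKclosed hv
    have hu0 : 0 < u := by
      have := hfu 0 h0K
      simpa using this
    have hfK : ∀ w ∈ K, f w ≤ 0 := by
      intro w hw
      by_contra hfw
      push_neg at hfw
      have h1 := hfu ((u / f w) • w) (hscale w hw _ (div_nonneg hu0.le hfw.le))
      rw [_root_.map_smul, smul_eq_mul, div_mul_cancel₀ _ hfw.ne'] at h1
      exact lt_irrefl u h1
    set d := (InnerProductSpace.toDual ℝ (EuclideanSpace ℝ (Fin n))).symm f with hd
    have hdw : ∀ w, ⟪d, w⟫ = f w := fun w =>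
      InnerProductSpace.toDual_symm_apply
    have hcon := hNC d ?_ ?_
    · rw [real_inner_comm, hdw] at hcon
      have : (0:ℝ) < f (x - xstar) := hu0.trans huv
      linarith
    · intro i hact
      rw [real_inner_comm, hdw]
      exact hfK _ (hgen _ (hGmem i hact))
    · intro j
      have h1 : f (e j) ≤ 0 := by
        have := hfK _ (hgen _ (hGmem1 j))
        simpa [hg] using this
      have h2 : f (-e j) ≤ 0 := by
        have := hfK _ (hgen _ (hGmem2 j))
        simpa [hg] using this
      rw [ContinuousLinearMap.map_neg] at h2
      rw [real_inner_comm, hdw]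
      linarith
  -- extract an independent representation
  obtain ⟨m, hm, hvsum⟩ := hvK
  obtain ⟨T, hTG, hTind, m', hm', hsum'⟩ := hoffman_carath g G m (fun k _ => hm k)
  have hv : x - xstar = ∑ k ∈ T, m' k • g k := by rw [hsum', ← hvsum]
  set cres : (Fin p ⊕ (Fin q ⊕ Fin q)) → ℝ := Sum.elim (fun i => max (⟪a i, x⟫ - z i) 0)
    (Sum.elim (fun j => |⟪e j, x⟫ - s j|) (fun j => |⟪e j, x⟫ - s j|)) with hcres
  have hgv : ∀ k ∈ T, ⟪g k, x - xstar⟫ ≤ cres k := by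
    intro k hkT
    have hkG := hTG hkT
    match k with
    | Sum.inl i =>
      have hact : ⟪a i, xstar⟫ = z i := by
        rw [hG, Finset.mem_filter] at hkG
        exact hkG.2
      simp only [hg, hcres, Sum.elim_inl]
      rw [inner_sub_right, hact]
      exact le_max_left _ _
    | Sum.inr (Sum.inl j) =>
      simp only [hg, hcres, Sum.elim_inr, Sum.elim_inl]
      rw [inner_sub_right, hxstar.2 j]
      exact le_abs_self _
    | Sum.inr (Sum.inr j) =>
      simp only [hg, hcres, Sum.elim_inr]
      rw [inner_neg_left, inner_sub_right, hxstar.2 j]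
      exact neg_le_abs _
  have hnormsq : ‖x - xstar‖ ^ 2 ≤ ∑ k ∈ T, m' k * cres k := by
    have h1 : ‖x - xstar‖ ^ 2 = ∑ k ∈ T, m' k * ⟪g k, x - xstar⟫ := by
      rw [← real_inner_self_eq_norm_sq]
      nth_rewrite 1 [hv]
      rw [sum_inner]
      exact Finset.sum_congr rfl fun k _ => real_inner_smul_left _ _ _
    rw [h1]
    exact Finset.sum_le_sum fun k hk =>
      mul_le_mul_of_nonneg_left (hgv k hk) (hm' k hk)
  have hCS : ∑ k ∈ T, m' k * cres k ≤
      Real.sqrt (∑ k ∈ T, m' k ^ 2) * Real.sqrt (∑ k ∈ T, cres k ^ 2) := by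
    have h := Finset.sum_mul_sq_le_sq_mul_sq T m' cres
    calc ∑ k ∈ T, m' k * cres k ≤ |∑ k ∈ T, m' k * cres k| := le_abs_self _
      _ = Real.sqrt ((∑ k ∈ T, m' k * cres k) ^ 2) := (Real.sqrt_sq_eq_abs _).symm
      _ ≤ Real.sqrt ((∑ k ∈ T, m' k ^ 2) * ∑ k ∈ T, cres k ^ 2) := Real.sqrt_le_sqrt h
      _ = _ := Real.sqrt_mul (Finset.sum_nonneg fun k _ => sq_nonneg _) _
  have hE2 : ‖Matrix.toEuclideanLin (𝕜 := ℝ) E x - s‖ ^ 2 = ∑ j, (⟪e j, x⟫ - s j) ^ 2 := by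
    rw [EuclideanSpace.norm_eq, Real.sq_sqrt (Finset.sum_nonneg fun j _ => sq_nonneg _)]
    apply Finset.sum_congr rfl
    intro j _
    have hcomp : (Matrix.toEuclideanLin (𝕜 := ℝ) E x - s) j = ⟪e j, x⟫ - s j := by
      rw [PiLp.sub_apply, hEinner]
    rw [Real.norm_eq_abs, sq_abs, hcomp]
  have hcbound : ∑ k ∈ T, cres k ^ 2 ≤ 2 * Rq := by
    calc ∑ k ∈ T, cres k ^ 2 ≤ ∑ k, cres k ^ 2 :=
          Finset.sum_le_univ_sum_of_nonneg fun k => sq_nonneg _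
      _ = (∑ i, cres (Sum.inl i) ^ 2) + ((∑ j, cres (Sum.inr (Sum.inl j)) ^ 2) +
          (∑ j, cres (Sum.inr (Sum.inr j)) ^ 2)) := by
          rw [Fintype.sum_sum_type, Fintype.sum_sum_type]
      _ = (∑ i, max (⟪a i, x⟫ - z i) 0 ^ 2) + 2 * (∑ j, (⟪e j, x⟫ - s j) ^ 2) := by
          simp only [hcres, Sum.elim_inl, Sum.elim_inr, sq_abs]
          ring
      _ ≤ 2 * Rq := by
          rw [hRq, hE2]
          have h1 : ∑ i, max (⟪a i, x⟫ - z i) 0 ^ 2 =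
              ∑ i, max (Matrix.toEuclideanLin (𝕜 := ℝ) A x i - z i) 0 ^ 2 := by
            apply Finset.sum_congr rfl
            intro i _
            rw [hAinner]
          rw [h1]
          have h2 : 0 ≤ ∑ i, max (Matrix.toEuclideanLin (𝕜 := ℝ) A x i - z i) 0 ^ 2 :=
            Finset.sum_nonneg fun i _ => sq_nonneg _
          linarith
  have hmb : Real.sqrt (∑ k ∈ T, m' k ^ 2) ≤ C * ‖x - xstar‖ := by
    have h := hCunif T hTind m'
    rw [← hv] at h
    exact h
  -- put everything together
  have hfinal : ‖x - xstar‖ ≤ (Real.sqrt 2 * C) * Real.sqrt Rq := by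
    have hsq2 : Real.sqrt (∑ k ∈ T, cres k ^ 2) ≤ Real.sqrt 2 * Real.sqrt Rq := by
      rw [← Real.sqrt_mul (by norm_num)]
      exact Real.sqrt_le_sqrt hcbound
    have hchain : ‖x - xstar‖ ^ 2 ≤ (C * ‖x - xstar‖) * (Real.sqrt 2 * Real.sqrt Rq) := by
      calc ‖x - xstar‖ ^ 2 ≤ ∑ k ∈ T, m' k * cres k := hnormsq
        _ ≤ Real.sqrt (∑ k ∈ T, m' k ^ 2) * Real.sqrt (∑ k ∈ T, cres k ^ 2) := hCS
        _ ≤ (C * ‖x - xstar‖) * (Real.sqrt 2 * Real.sqrt Rq) := by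
            apply mul_le_mul hmb hsq2 (Real.sqrt_nonneg _)
            positivity
    rcases eq_or_lt_of_le (norm_nonneg (x - xstar)) with h0 | h0
    · rw [← h0]
      positivity
    · have h2 : ‖x - xstar‖ * ‖x - xstar‖ ≤
          ‖x - xstar‖ * ((Real.sqrt 2 * C) * Real.sqrt Rq) := by
        calc ‖x - xstar‖ * ‖x - xstar‖ = ‖x - xstar‖ ^ 2 := (sq _).symm
          _ ≤ (C * ‖x - xstar‖) * (Real.sqrt 2 * Real.sqrt Rq) := hchain
          _ = ‖x - xstar‖ * ((Real.sqrt 2 * C) * Real.sqrt Rq) := by ring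
      exact le_of_mul_le_mul_left h2 h0
  refine ⟨⟨xstar, hxstarP, ?_⟩, ?_⟩
  · exact hfinal
  · rw [hdisteq, dist_eq_norm]
    exact hfinal
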